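/- Let η2p, η2m ∈ ℝ with η2p > 0, η2m > 0 and η2p + η2m ≤ 1, and set η1 = Real.sqrt (η2p * (1 - η2m)) - η2m (the upper realizability boundary). Define η1p = η2p * (η1 + η2m * Real.sqrt ((η2p + η2m - η1²) / (η2m * η2p))) / (η2m + η2p) and η1m = η2m * (η1 - η2p * Real.sqrt ((η2p + η2m - η1²) / (η2m * η2p))) / (η2m + η2p). Then η1p ≥ η2p and -η1m ≥ η2m. -/

import Mathlib

theorem dmm2_half_moment_realizability_upper_boundary
    (η2p η2m : ℝ) (h2p : 0 < η2p) (h2m : 0 < η2m) (hsum : η2p + η2m ≤ 1)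
    (η1 : ℝ) (hη1 : η1 = Real.sqrt (η2p * (1 - η2m)) - η2m)
    (η1p η1m : ℝ)
    (hη1p : η1p = η2p * (η1 + η2m * Real.sqrt ((η2p + η2m - η1 ^ 2) / (η2m * η2p))) / (η2m + η2p))
    (hη1m : η1m = η2m * (η1 - η2p * Real.sqrt ((η2p + η2m - η1 ^ 2) / (η2m * η2p))) / (η2m + η2p)) :
    η1p ≥ η2p ∧ -η1m ≥ η2m := by
  set t := Real.sqrt ((1 - η2m) / η2p) with ht
  have hnn : 0 ≤ (1 - η2m) / η2p := by
    apply div_nonneg _ h2p.le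
    linarith
  have htnn : 0 ≤ t := Real.sqrt_nonneg _
  have ht2 : t ^ 2 = (1 - η2m) / η2p := Real.sq_sqrt hnn
  have hs : Real.sqrt (η2p * (1 - η2m)) = η2p * t := by
    rw [ht, ← Real.sqrt_sq h2p.le, ← Real.sqrt_mul (sq_nonneg η2p)]
    congr 1
    field_simp
    rw [Real.sq_sqrt (sq_nonneg η2p)]
  have hη1' : η1 = η2p * t - η2m := by rw [hη1, hs]
  have harg : (η2p + η2m - η1 ^ 2) / (η2m * η2p) = (1 + t) ^ 2 := by
    rw [hη1']
    have h1 : η2p * t ^ 2 = 1 - η2m := by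
      rw [ht2]; field_simp
    field_simp
    nlinarith [h1]
  have hR : Real.sqrt ((η2p + η2m - η1 ^ 2) / (η2m * η2p)) = 1 + t := by
    rw [harg, Real.sqrt_sq (by linarith)]
  have hη1p' : η1p = η2p * t := by
    rw [hη1p, hR, hη1']
    field_simp
    ring
  have hη1m' : η1m = -η2m := by
    rw [hη1m, hR, hη1']
    field_simp
    ring
  have ht1 : 1 ≤ t := by
    have h1 : (1:ℝ) ≤ (1 - η2m) / η2p := by
      rw [le_div_iff₀ h2p]; linarith
    calc (1:ℝ) = Real.sqrt 1 := Real.sqrt_one.symm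
      _ ≤ t := Real.sqrt_le_sqrt h1
  constructor
  · rw [hη1p']
    nlinarith
  · rw [hη1m']
    linarith
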